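/- For the map G(z) = (z₀α(z) − z₁²(z₀+z₄), z₁²(z₂+z₃), z₄α(z), z₂α(z), z₃α(z)) on ℂ⁵, where α(z) = (z₀+z₄)² − (z₂+z₃)², one has ‖G(z)‖₁ ≤ ‖z‖₁³ for all z ∈ ℂ⁵. -/

import Mathlib

lemma absSub (x y : ℂ) : ‖x - y‖ ≤ ‖x‖ + ‖y‖ := by
  rw [sub_eq_add_neg]
  calc ‖x + -y‖ ≤ ‖x‖ + ‖-y‖ := norm_add_le _ _
    _ = ‖x‖ + ‖y‖ := by rw [norm_neg]

/-- For the Grigorchuk map `G` on `ℂ⁵`, `‖G(z)‖₁ ≤ ‖z‖₁³`. -/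
theorem stmt_1 (z0 z1 z2 z3 z4 : ℂ) :
    ‖z0 * ((z0 + z4) ^ 2 - (z2 + z3) ^ 2) - z1 ^ 2 * (z0 + z4)‖
      + ‖z1 ^ 2 * (z2 + z3)‖
      + ‖z4 * ((z0 + z4) ^ 2 - (z2 + z3) ^ 2)‖
      + ‖z2 * ((z0 + z4) ^ 2 - (z2 + z3) ^ 2)‖
      + ‖z3 * ((z0 + z4) ^ 2 - (z2 + z3) ^ 2)‖
      ≤ (‖z0‖ + ‖z1‖ + ‖z2‖ + ‖z3‖
          + ‖z4‖) ^ 3 := by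
  set a := ‖z0‖
  set b := ‖z1‖
  set c := ‖z2‖
  set d := ‖z3‖
  set e := ‖z4‖
  have ha : 0 ≤ a := norm_nonneg _
  have hb : 0 ≤ b := norm_nonneg _
  have hc : 0 ≤ c := norm_nonneg _
  have hd : 0 ≤ d := norm_nonneg _
  have he : 0 ≤ e := norm_nonneg _
  set α := (z0 + z4) ^ 2 - (z2 + z3) ^ 2 with hα
  have hαfac : α = (z0 + z4 + (z2 + z3)) * (z0 + z4 - (z2 + z3)) := by ring
  have hAbound : ‖α‖ ≤ (a + e + (c + d)) ^ 2 := by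
    rw [hαfac, norm_mul]
    have h1 : ‖z0 + z4 + (z2 + z3)‖ ≤ a + e + (c + d) := by
      calc ‖z0 + z4 + (z2 + z3)‖
          ≤ ‖z0 + z4‖ + ‖z2 + z3‖ := norm_add_le _ _
        _ ≤ (a + e) + (c + d) := by
            gcongr <;> exact norm_add_le _ _
    have h2 : ‖z0 + z4 - (z2 + z3)‖ ≤ a + e + (c + d) := by
      calc ‖z0 + z4 - (z2 + z3)‖
          ≤ ‖z0 + z4‖ + ‖z2 + z3‖ := absSub _ _
        _ ≤ (a + e) + (c + d) := by
            gcongr <;> exact norm_add_le _ _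
    calc ‖z0 + z4 + (z2 + z3)‖ * ‖z0 + z4 - (z2 + z3)‖
        ≤ (a + e + (c + d)) * (a + e + (c + d)) := by
          apply mul_le_mul h1 h2 (norm_nonneg _)
          positivity
      _ = (a + e + (c + d)) ^ 2 := by ring
  have hA0 : 0 ≤ ‖α‖ := norm_nonneg _
  have t1 : ‖z0 * α - z1 ^ 2 * (z0 + z4)‖
      ≤ a * ‖α‖ + b ^ 2 * (a + e) := by
    calc ‖z0 * α - z1 ^ 2 * (z0 + z4)‖
        ≤ ‖z0 * α‖ + ‖z1 ^ 2 * (z0 + z4)‖ :=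
          absSub _ _
      _ = a * ‖α‖ + b ^ 2 * ‖z0 + z4‖ := by
          rw [norm_mul, norm_mul, norm_pow]
      _ ≤ a * ‖α‖ + b ^ 2 * (a + e) := by
          gcongr
          exact norm_add_le _ _
  have t2 : ‖z1 ^ 2 * (z2 + z3)‖ ≤ b ^ 2 * (c + d) := by
    rw [norm_mul, norm_pow]
    gcongr
    exact norm_add_le _ _
  have t3 : ‖z4 * α‖ = e * ‖α‖ := norm_mul _ _
  have t4 : ‖z2 * α‖ = c * ‖α‖ := norm_mul _ _
  have t5 : ‖z3 * α‖ = d * ‖α‖ := norm_mul _ _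
  rw [t3, t4, t5]
  nlinarith [mul_le_mul_of_nonneg_left hAbound (by positivity : (0:ℝ) ≤ a + c + d + e),
    sq_nonneg b, mul_nonneg (mul_nonneg hb hb) (add_nonneg (add_nonneg (add_nonneg ha hc) hd) he),
    mul_nonneg (sq_nonneg b) hb,
    mul_nonneg (mul_nonneg hb hb) (mul_nonneg (add_nonneg (add_nonneg (add_nonneg ha hc) hd) he) (add_nonneg (add_nonneg (add_nonneg ha hc) hd) he))]
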